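/- Let n and t be positive integers with t < n, and let C = {C_1,…,C_M} be an (n,t)-cooling code of size M. Then M ≤ 2^{n−t}. -/

import Mathlib

/-- An `(n,t)`-cooling code of size `M` over coefficients `F`: `M` pairwise disjoint
subsets (codesets) of `F^n` such that for every `t`-subset `S` of coordinates and every
codeset, some vector in the codeset has support disjoint from `S`. -/
def IsCoolingCode (F : Type*) [Zero F] (n t M : ℕ)
    (C : Fin M → Set (Fin n → F)) : Prop :=
  (∀ i j : Fin M, i ≠ j → Disjoint (C i) (C j)) ∧
  ∀ S : Finset (Fin n), S.card = t → ∀ i : Fin M,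
    ∃ x ∈ C i, ∀ j ∈ S, x j = 0

theorem stmt_4 (n t M : ℕ) (ht : 0 < t) (htn : t < n)
    (C : Fin M → Set (Fin n → ZMod 2))
    (hC : IsCoolingCode (ZMod 2) n t M C) :
    M ≤ 2 ^ (n - t) := by
  obtain ⟨hdisj, hcov⟩ := hC
  obtain ⟨S, -, hScard⟩ := Finset.exists_subset_card_eq (s := (Finset.univ : Finset (Fin n))) (n := t)
    (by simp [Nat.le_of_lt htn])
  choose x hxC hxS using hcov S hScard
  have hinj : Function.Injective (fun i : Fin M => fun j : (Sᶜ : Finset (Fin n)) => x i j) := by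
    intro i k h
    by_contra hne
    refine Set.disjoint_left.mp (hdisj i k hne) (hxC i) ?_
    have hxeq : x i = x k := by
      funext j
      by_cases hj : j ∈ S
      · rw [hxS i j hj, hxS k j hj]
      · exact congrFun h ⟨j, Finset.mem_compl.mpr hj⟩
    rw [hxeq]; exact hxC k
  have := Fintype.card_le_of_injective _ hinj
  simpa [Finset.card_compl, hScard] using this
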